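/- Let a, b ∈ {0,1}* with |a| > |b|, and suppose δ(a,b) ∈ {Q', Q'−ρ} for constants Q', ρ with 0 < ρ < Q'. Define a_new = 2^{|a|} ++ a and b_new = 0^{|a|−|b|} ++ 2^{|a|} ++ b over alphabet {0,1,2} (where 2^{|a|} denotes the symbol 2 repeated |a| times). Then |a_new| = |b_new| and δ(a_new, b_new) = (|a| − |b|) + δ(a,b); in particular, with Q = Q' + |a| − |b|, δ(a_new,b_new) = Q − ρ iff δ(a,b) = Q' − ρ, and δ(a_new,b_new) = Q iff δ(a,b) = Q'. -/

import Mathlib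

/-- Cost structure for Levenshtein distance (formerly in Mathlib, `Mathlib.Data.List.EditDistance.Defs`). -/
structure Levenshtein.Cost (α β δ : Type*) where
  delete : α → δ
  insert : β → δ
  substitute : α → β → δ

/-- The default unit-cost structure (formerly in Mathlib). -/
def Levenshtein.defaultCost {α : Type*} [DecidableEq α] : Levenshtein.Cost α α ℕ where
  delete _ := 1
  insert _ := 1
  substitute a b := if a = b then 0 else 1

/-- Levenshtein distance with cost structure `C`, by the recurrence that Mathlib's removed
`levenshtein` satisfied (`levenshtein_nil_nil`, `levenshtein_nil_cons`, `levenshtein_cons_nil`,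
`levenshtein_cons_cons`). -/
def levenshtein {α β δ : Type*} [AddZeroClass δ] [Min δ] (C : Levenshtein.Cost α β δ) :
    List α → List β → δ
  | [], [] => 0
  | [], y :: ys => C.insert y + levenshtein C [] ys
  | x :: xs, [] => C.delete x + levenshtein C xs []
  | x :: xs, y :: ys =>
      min (C.delete x + levenshtein C xs (y :: ys))
        (min (C.insert y + levenshtein C (x :: xs) ys) (C.substitute x y + levenshtein C xs ys))

/-- Unit-cost edit distance between two lists over a decidable-eq alphabet. -/
def editDist (a b : List ℕ) : ℕ :=
  levenshtein Levenshtein.defaultCost a b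

lemma ed_nil_left (v : List ℕ) : editDist [] v = v.length := by
  induction v with
  | nil => simp [editDist, levenshtein]
  | cons y v ih => simp [editDist, levenshtein, Levenshtein.defaultCost] at *; first | omega | (simp only [List.length_cons] at *; omega)

lemma ed_nil_right (u : List ℕ) : editDist u [] = u.length := by
  induction u with
  | nil => simp [editDist, levenshtein]
  | cons x u ih => simp [editDist, levenshtein, Levenshtein.defaultCost] at *; first | omega | (simp only [List.length_cons] at *; omega)

lemma ed_cons_cons (x y : ℕ) (u v : List ℕ) :
    editDist (x::u) (y::v) = min (1 + editDist u (y::v))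
      (min (1 + editDist (x::u) v) ((if x = y then 0 else 1) + editDist u v)) := by
  simp [editDist, levenshtein, Levenshtein.defaultCost]

lemma ed_del_le (x : ℕ) (u v : List ℕ) : editDist (x::u) v ≤ 1 + editDist u v := by
  cases v with
  | nil => rw [ed_nil_right, ed_nil_right]; first | omega | (simp only [List.length_cons] at *; omega)
  | cons y v => rw [ed_cons_cons]; first | omega | (simp only [List.length_cons] at *; omega)

lemma ed_ins_le (y : ℕ) (u v : List ℕ) : editDist u (y::v) ≤ 1 + editDist u v := by
  cases u with
  | nil => rw [ed_nil_left, ed_nil_left]; first | omega | (simp only [List.length_cons] at *; omega)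
  | cons x u => rw [ed_cons_cons]; first | omega | (simp only [List.length_cons] at *; omega)

lemma ed_sub_le (x y : ℕ) (u v : List ℕ) :
    editDist (x::u) (y::v) ≤ (if x = y then 0 else 1) + editDist u v := by
  rw [ed_cons_cons]; first | omega | (simp only [List.length_cons] at *; omega)

lemma ed_le_ins (y : ℕ) (u v : List ℕ) : editDist u v ≤ 1 + editDist u (y::v) := by
  induction u generalizing v y with
  | nil => rw [ed_nil_left, ed_nil_left]; first | omega | (simp only [List.length_cons] at *; omega)
  | cons x u ih =>
    rw [ed_cons_cons x y]
    have h1 : editDist (x::u) v ≤ 1 + editDist u v := ed_del_le x u v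
    have h2 : editDist u v ≤ 1 + editDist u (y::v) := ih y v
    cases v with
    | nil =>
      rw [ed_nil_right, ed_nil_right] at *
      first | omega | (simp only [List.length_cons] at *; omega)
    | cons z w =>
      have h3 : editDist (x::u) (z::w) ≤ 1 + editDist u (z::w) := ed_del_le x u (z::w)
      first | omega | (simp only [List.length_cons] at *; omega)

lemma ed_le_del (x : ℕ) (u v : List ℕ) : editDist u v ≤ 1 + editDist (x::u) v := by
  induction v generalizing u x with
  | nil => rw [ed_nil_right, ed_nil_right]; first | omega | (simp only [List.length_cons] at *; omega)
  | cons y v ih =>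
    rw [ed_cons_cons x y]
    have h1 : editDist u (y::v) ≤ 1 + editDist u v := ed_ins_le y u v
    have h2 : editDist u v ≤ 1 + editDist (x::u) v := ih x u
    first | omega | (simp only [List.length_cons] at *; omega)

lemma ed_cons_same (c : ℕ) (u v : List ℕ) : editDist (c::u) (c::v) = editDist u v := by
  rw [ed_cons_cons, if_pos rfl]
  have h1 := ed_le_ins c u v
  have h2 := ed_le_del c u v
  omega

lemma ed_append_same (r u v : List ℕ) : editDist (r ++ u) (r ++ v) = editDist u v := by
  induction r with
  | nil => rfl
  | cons c r ih => simpa [ed_cons_same] using ih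

lemma ed_prepend_right_le (s : List ℕ) (u v : List ℕ) :
    editDist u (s ++ v) ≤ s.length + editDist u v := by
  induction s with
  | nil => simp
  | cons y s ih =>
    have := ed_ins_le y u (s ++ v)
    simp only [List.cons_append, List.length_cons]
    omega

lemma ed_count_le (c : ℕ) (u v : List ℕ) : v.count c ≤ editDist u v + u.count c := by
  cases u with
  | nil =>
    rw [ed_nil_left]
    have := List.count_le_length (a := c) (l := v)
    omega
  | cons x u =>
    cases v with
    | nil => simp
    | cons y v =>
      rw [ed_cons_cons]
      have h1 := ed_count_le c u (y::v)
      have h2 := ed_count_le c (x::u) v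
      have h3 := ed_count_le c u v
      have hc1 : (y::v).count c = v.count c + (if y = c then 1 else 0) := by
        simp [List.count_cons]
      have hc2 : (x::u).count c = u.count c + (if x = c then 1 else 0) := by
        simp [List.count_cons]
      split_ifs at * <;> omega
termination_by u.length + v.length

lemma ed_le_max (u v : List ℕ) : editDist u v ≤ max u.length v.length := by
  induction u generalizing v with
  | nil => rw [ed_nil_left]; omega
  | cons x u ih =>
    cases v with
    | nil => rw [ed_nil_right]; simp
    | cons y v =>
      have h := ih v
      have hs := ed_sub_le x y u v
      simp only [List.length_cons]
      split_ifs at hs <;> omega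

lemma filter_replicate_two (r : ℕ) : (List.replicate r 2).filter (· ≠ 2) = ([] : List ℕ) := by
  induction r with
  | zero => rfl
  | succ r ih => simp [List.replicate_succ, List.filter_cons, ih]

lemma ed_filter_le (u v : List ℕ) :
    editDist (u.filter (· ≠ 2)) (v.filter (· ≠ 2)) ≤ editDist u v := by
  match u, v with
  | [], v =>
    simp only [List.filter_nil]
    rw [ed_nil_left, ed_nil_left]
    exact List.length_filter_le _ _
  | x :: u, [] =>
    simp only [List.filter_nil]
    rw [ed_nil_right, ed_nil_right]
    exact List.length_filter_le _ _
  | x :: u, y :: v =>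
    have h1 := ed_filter_le u (y::v)
    have h2 := ed_filter_le (x::u) v
    have h3 := ed_filter_le u v
    have fx : (x::u).filter (· ≠ 2) =
        if x = 2 then u.filter (· ≠ 2) else x :: u.filter (· ≠ 2) := by
      split <;> simp_all [List.filter_cons]
    have fy : (y::v).filter (· ≠ 2) =
        if y = 2 then v.filter (· ≠ 2) else y :: v.filter (· ≠ 2) := by
      split <;> simp_all [List.filter_cons]
    rw [ed_cons_cons]
    refine le_min ?_ (le_min ?_ ?_)
    · rw [fx]
      split_ifs with hx
      · omega
      · have := ed_del_le x (u.filter (· ≠ 2)) ((y::v).filter (· ≠ 2))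
        omega
    · rw [fy]
      split_ifs with hy
      · omega
      · have := ed_ins_le y ((x::u).filter (· ≠ 2)) (v.filter (· ≠ 2))
        omega
    · by_cases hxy : x = y
      · rw [if_pos hxy]
        subst hxy
        rw [fx, fy]
        split_ifs with hx
        · omega
        · rw [ed_cons_same]
          omega
      · rw [if_neg hxy, fx, fy]
        split_ifs with hx hy hy
        · exact absurd (hx.trans hy.symm) hxy
        · have := ed_ins_le y (u.filter (· ≠ 2)) (v.filter (· ≠ 2))
          omega
        · have := ed_del_le x (u.filter (· ≠ 2)) (v.filter (· ≠ 2))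
          omega
        · have := ed_sub_le x y (u.filter (· ≠ 2)) (v.filter (· ≠ 2))
          rw [if_neg hxy] at this
          omega
termination_by u.length + v.length

lemma main_lb (a b : List ℕ) (h2a : (2:ℕ) ∉ a) (h2b : (2:ℕ) ∉ b)
    (hm : b.length ≤ a.length)
    (p k : ℕ) (hp : p ≤ a.length) :
    min (k + editDist a b) (p + (editDist a b - b.length)) ≤
      editDist (List.replicate p 2 ++ a)
        (List.replicate k 0 ++ (List.replicate a.length 2 ++ b)) := by
  match p, k with
  | p+1, k+1 =>
    have h1 := main_lb a b h2a h2b hm p (k+1) (by omega)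
    have h2 := main_lb a b h2a h2b hm (p+1) k hp
    have h3 := main_lb a b h2a h2b hm p k (by omega)
    simp only [List.replicate_succ, List.cons_append] at h1 h2 h3 ⊢
    rw [ed_cons_cons, if_neg (by norm_num : ¬ (2:ℕ) = 0)]
    omega
  | 0, k =>
    have hcnt := ed_count_le 2 a
      (List.replicate k 0 ++ (List.replicate a.length 2 ++ b))
    have ca : a.count 2 = 0 := List.count_eq_zero.mpr h2a
    have cb : b.count 2 = 0 := List.count_eq_zero.mpr h2b
    have hmax := ed_le_max a b
    have hc : (List.replicate k 0 ++ (List.replicate a.length 2 ++ b)).count 2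
        = a.length := by
      simp [List.count_append, List.count_replicate, cb]
    simp only [List.replicate_zero, List.nil_append]
    omega
  | p+1, 0 =>
    have hsplit : List.replicate a.length 2 =
        List.replicate (p+1) 2 ++ List.replicate (a.length - (p+1)) (2:ℕ) := by
      rw [← List.replicate_add]
      congr 1
      omega
    simp only [List.replicate_zero, List.nil_append]
    rw [hsplit, List.append_assoc, ed_append_same]
    have hf := ed_filter_le a (List.replicate (a.length - (p+1)) 2 ++ b)
    have fa : a.filter (· ≠ 2) = a := by
      rw [List.filter_eq_self]
      intro x hx
      simp only [ne_eq, decide_not, Bool.not_eq_true', decide_eq_false_iff_not] at *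
      intro h
      exact h2a (h ▸ hx)
    have fb : (List.replicate (a.length - (p+1)) 2 ++ b).filter (· ≠ 2) = b := by
      rw [List.filter_append, filter_replicate_two, List.nil_append]
      rw [List.filter_eq_self]
      intro x hx
      simp only [ne_eq, decide_not, Bool.not_eq_true', decide_eq_false_iff_not] at *
      intro h
      exact h2b (h ▸ hx)
    rw [fa, fb] at hf
    omega
termination_by p + k


/-- Gadget size equalization (Theorem on preserving gadget sizes):
prepending `2^{|a|}` to `a` and `0^{|a|-|b|} 2^{|a|}` to `b` yields strings of
equal length whose edit distance is `(|a|-|b|) + δ(a,b)`. -/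
theorem gadget_size_preserved
    (a b : List ℕ) (Q' ρ : ℕ)
    (ha : ∀ x ∈ a, x = 0 ∨ x = 1) (hb : ∀ x ∈ b, x = 0 ∨ x = 1)
    (hlen : b.length < a.length)
    (hρ : 0 < ρ) (hρQ : ρ < Q')
    (hδ : editDist a b = Q' ∨ editDist a b = Q' - ρ) :
    let aNew := List.replicate a.length 2 ++ a
    let bNew := List.replicate (a.length - b.length) 0 ++ List.replicate a.length 2 ++ b
    let Q := Q' + a.length - b.length
    aNew.length = bNew.length ∧
    editDist aNew bNew = (a.length - b.length) + editDist a b ∧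
    (editDist aNew bNew = Q - ρ ↔ editDist a b = Q' - ρ) ∧
    (editDist aNew bNew = Q ↔ editDist a b = Q') := by
  intro aNew bNew Q
  have h2a : (2:ℕ) ∉ a := fun h => by rcases ha 2 h with h'|h' <;> simp at h'
  have h2b : (2:ℕ) ∉ b := fun h => by rcases hb 2 h with h'|h' <;> simp at h'
  have hD : editDist a b ≤ a.length := by
    have := ed_le_max a b
    omega
  have key : editDist aNew bNew = (a.length - b.length) + editDist a b := by
    show editDist (List.replicate a.length 2 ++ a)
        (List.replicate (a.length - b.length) 0 ++ List.replicate a.length 2 ++ b)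
        = (a.length - b.length) + editDist a b
    rw [List.append_assoc]
    apply le_antisymm
    · have h := ed_prepend_right_le (List.replicate (a.length - b.length) 0)
        (List.replicate a.length 2 ++ a) (List.replicate a.length 2 ++ b)
      rw [ed_append_same, List.length_replicate] at h
      exact h
    · have h := main_lb a b h2a h2b (le_of_lt hlen) a.length (a.length - b.length) le_rfl
      omega
  refine ⟨?_, key, ?_, ?_⟩
  · show (List.replicate a.length 2 ++ a).length =
      (List.replicate (a.length - b.length) 0 ++ List.replicate a.length 2 ++ b).length
    simp only [List.length_append, List.length_replicate]
    omega
  · show editDist aNew bNew = Q' + a.length - b.length - ρ ↔ editDist a b = Q' - ρ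
    rcases hδ with h | h <;> omega
  · show editDist aNew bNew = Q' + a.length - b.length ↔ editDist a b = Q'
    rcases hδ with h | h <;> omega
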